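/- Let X₁, …, X_{n₁} be i.i.d. real random variables whose common cumulative distribution function F is continuous (equivalently, their common law is atomless). Fix α ∈ (0,1) and set v = ⌈(n₁ + 1)(1 − α)⌉, and assume v ≤ n₁. Let X_(v) denote the v-th order statistic (v-th smallest). Then P(1 − F(X_(v)) > α) = Σ_{j=v}^{n₁} C(n₁,j)·(1−α)^j·α^{n₁−j}. -/

import Mathlib

open MeasureTheory ProbabilityTheory
open scoped ENNReal

/-- The `v`-th order statistic (the `v`-th smallest value, `1 ≤ v ≤ n`) of the values
`x 0, …, x (n-1)`. -/
noncomputable def orderStat {n : ℕ} (x : Fin n → ℝ) (v : ℕ) : ℝ :=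
  ((List.ofFn x).insertionSort (· ≤ ·)).getD (v - 1) 0

section AuxLemmas

lemma aux_sorted_countP {L : List ℝ} (hs : List.Pairwise (· ≤ ·) L) (p : ℝ → Bool)
    (hp : ∀ a b : ℝ, a ≤ b → p b = true → p a = true) :
    ∀ k, k < L.length → (p (L.getD k 0) = true ↔ k < L.countP p) := by
  induction L with
  | nil => simp
  | cons a l ih =>
    obtain ⟨ha, hsl⟩ := List.pairwise_cons.1 hs
    intro k hk
    cases k with
    | zero =>
      simp only [List.getD_cons_zero, List.countP_cons]
      constructor
      · intro h; simp [h]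
      · intro h
        by_cases hpa : p a = true
        · exact hpa
        · simp only [hpa, if_false, add_zero] at h
          obtain ⟨b, hb, hpb⟩ := List.countP_pos_iff.1 h
          exact hp a b (ha b hb) hpb
    | succ k =>
      simp only [List.getD_cons_succ, List.countP_cons]
      have hk' : k < l.length := by simpa using hk
      constructor
      · intro h
        have hcount : k < l.countP p := (ih hsl k hk').1 h
        have hmem : l.getD k 0 ∈ l := by
          rw [List.getD_eq_getElem l 0 hk']; exact List.getElem_mem _
        have hpa : p a = true := hp a _ (ha _ hmem) h
        simp only [hpa, if_true]; omega
      · intro h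
        have : k < l.countP p := by split at h <;> omega
        exact (ih hsl k hk').2 this

lemma aux_countP_ofFn {n : ℕ} (x : Fin n → ℝ) (p : ℝ → Bool) :
    (List.ofFn x).countP p = (Finset.univ.filter fun i => p (x i) = true).card := by
  classical
  induction n with
  | zero => simp
  | succ m ih =>
    rw [List.ofFn_succ, List.countP_cons, ih,
      Fin.card_filter_univ_succ' (p := fun i => p (x i) = true)]
    omega

open Filter Set Topology in
lemma aux_uniform (ν : Measure ℝ) [IsProbabilityMeasure ν] (F : ℝ → ℝ)
    (hF : F = fun t => (ν (Set.Iic t)).toReal) (hFcont : Continuous F)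
    {t : ℝ} (ht0 : 0 < t) (ht1 : t < 1) :
    ν {x | F x < t} = ENNReal.ofReal t := by
  have hFeq : F = (cdf ν : ℝ → ℝ) := by
    funext x; rw [hF, cdf_eq_real, measureReal_def]
  have hmono : Monotone F := hFeq ▸ monotone_cdf ν
  have hbot : Tendsto F atBot (𝓝 0) := hFeq ▸ tendsto_cdf_atBot ν
  have htop : Tendsto F atTop (𝓝 1) := hFeq ▸ tendsto_cdf_atTop ν
  have hIic : ∀ x, ν (Set.Iic x) = ENNReal.ofReal (F x) := by
    intro x; rw [hFeq, ofReal_cdf]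
  have hex : ∀ c : ℝ, 0 < c → c < 1 → ∃ a, F a = c := by
    intro c hc0 hc1
    obtain ⟨x₀, hx₀⟩ := (hbot.eventually_lt_const hc0).exists
    obtain ⟨x₁, hx₁⟩ := (htop.eventually_const_lt hc1).exists
    have hx01 : x₀ ≤ x₁ := by
      by_contra h
      exact absurd (hmono (le_of_not_ge h)) (by linarith)
    obtain ⟨a, _, ha⟩ := intermediate_value_Icc hx01 hFcont.continuousOn
      (⟨le_of_lt hx₀, le_of_lt hx₁⟩ : c ∈ Set.Icc (F x₀) (F x₁))
    exact ⟨a, ha⟩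
  obtain ⟨a, ha⟩ := hex t ht0 ht1
  refine le_antisymm ?_ ?_
  · calc ν {x | F x < t} ≤ ν (Set.Iic a) := by
          refine measure_mono fun x hx => ?_
          simp only [Set.mem_setOf_eq] at hx
          by_contra h
          have hax : a ≤ x := le_of_not_ge (by simpa [Set.mem_Iic] using h)
          have := hmono hax
          rw [ha] at this; linarith
        _ = ENNReal.ofReal t := by rw [hIic, ha]
  · have key : ∀ c, 0 < c → c < t → ENNReal.ofReal c ≤ ν {x | F x < t} := by
      intro c hc0 hct
      obtain ⟨b, hb⟩ := hex c hc0 (lt_trans hct ht1)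
      calc ENNReal.ofReal c = ν (Set.Iic b) := by rw [hIic, hb]
        _ ≤ ν {x | F x < t} := measure_mono fun y hy => by
            simp only [Set.mem_setOf_eq]
            calc F y ≤ F b := hmono hy
              _ < t := by rw [hb]; exact hct
    have hfin : ν {x | F x < t} ≠ ⊤ := measure_ne_top ν _
    set r := (ν {x | F x < t}).toReal with hr
    have hcr : ∀ c, 0 < c → c < t → c ≤ r := by
      intro c hc0 hct
      have := key c hc0 hct
      rw [← ENNReal.ofReal_toReal hfin,
        ENNReal.ofReal_le_ofReal_iff ENNReal.toReal_nonneg] at this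
      exact this
    have htr : t ≤ r := by
      refine le_of_forall_lt fun c hc => ?_
      rcases le_or_gt c 0 with h | h
      · have := hcr (t/2) (by linarith) (by linarith); linarith
      · have h2 : (c + t)/2 ≤ r := hcr _ (by linarith) (by linarith)
        linarith
    calc ENNReal.ofReal t ≤ ENNReal.ofReal r := ENNReal.ofReal_le_ofReal htr
      _ = ν {x | F x < t} := ENNReal.ofReal_toReal hfin

open scoped Classical in
lemma aux_binomial_count {Ω : Type*} [MeasurableSpace Ω] (μ : Measure Ω)
    [IsProbabilityMeasure μ]
    (n : ℕ) (X : Fin n → Ω → ℝ) (hmeas : ∀ i, Measurable (X i))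
    (hindep : iIndepFun X μ)
    (s : Set ℝ) (hs : MeasurableSet s)
    (q : ℝ≥0∞) (hq : ∀ i, μ (X i ⁻¹' s) = q) (v : ℕ) :
    μ {ω | v ≤ (Finset.univ.filter fun i => X i ω ∈ s).card} =
      ∑ j ∈ Finset.Icc v n, (n.choose j : ℝ≥0∞) * q ^ j * (1 - q) ^ (n - j) := by
  set A : Fin n → Set Ω := fun i => X i ⁻¹' s with hA
  have hAmeas : ∀ i, MeasurableSet (A i) := fun i => (hmeas i) hs
  set T : Finset (Fin n) → Set Ω := fun S => {ω | ∀ i, (i ∈ S ↔ ω ∈ A i)} with hTdef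
  have hT : ∀ S, T S = ⋂ i, (if i ∈ S then A i else (A i)ᶜ) := by
    intro S; ext ω
    simp only [hTdef, Set.mem_iInter, Set.mem_setOf_eq]
    constructor
    · intro h i
      by_cases hi : i ∈ S <;> simp [hi, ← h i]
    · intro h i
      have := h i
      by_cases hi : i ∈ S <;> simp [hi] at this ⊢ <;> tauto
  have hTmeas : ∀ S, MeasurableSet (T S) := by
    intro S; rw [hT]
    exact MeasurableSet.iInter fun i => by
      split_ifs
      · exact hAmeas i
      · exact (hAmeas i).compl
  have hμcompl : ∀ i, μ ((A i)ᶜ) = 1 - q := by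
    intro i
    rw [measure_compl (hAmeas i) (measure_ne_top μ _), measure_univ, hq i]
  have hTμ : ∀ S : Finset (Fin n), μ (T S) = q ^ S.card * (1 - q) ^ (n - S.card) := by
    intro S
    have hmc : ∀ i, MeasurableSet[MeasurableSpace.comap (X i) Real.measurableSpace]
        (if i ∈ S then A i else (A i)ᶜ) := by
      intro i
      refine ⟨if i ∈ S then s else sᶜ, ?_, ?_⟩
      · split_ifs
        · exact hs
        · exact hs.compl
      · split_ifs <;> simp [hA]
    rw [hT S, hindep.meas_iInter hmc]
    calc ∏ i, μ (if i ∈ S then A i else (A i)ᶜ)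
        = ∏ i, (if i ∈ S then q else 1 - q) := by
          refine Finset.prod_congr rfl fun i _ => ?_
          split_ifs with hi
          · exact hq i
          · exact hμcompl i
      _ = q ^ S.card * (1 - q) ^ (n - S.card) := by
          rw [Finset.prod_ite, Finset.prod_const, Finset.prod_const]
          congr 2
          · rw [Finset.filter_univ_mem]
          · rw [Finset.filter_not, Finset.filter_univ_mem, ← Finset.compl_eq_univ_sdiff,
              Finset.card_compl, Fintype.card_fin]
  have hEvent : {ω | v ≤ (Finset.univ.filter fun i => X i ω ∈ s).card}
      = ⋃ S ∈ Finset.univ.filter (fun S : Finset (Fin n) => v ≤ S.card), T S := by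
    ext ω
    simp only [Set.mem_setOf_eq, Set.mem_iUnion, Finset.mem_filter, Finset.mem_univ, true_and]
    constructor
    · intro h
      refine ⟨Finset.univ.filter (fun i => X i ω ∈ s), ⟨h, ?_⟩⟩
      simp only [hTdef, Set.mem_setOf_eq, Finset.mem_filter, Finset.mem_univ, true_and]
      intro i; rfl
    · rintro ⟨S, hcard, hTS⟩
      simp only [hTdef, Set.mem_setOf_eq] at hTS
      have hSeq : Finset.univ.filter (fun i => X i ω ∈ s) = S := by
        ext i
        simp only [Finset.mem_filter, Finset.mem_univ, true_and]
        exact (hTS i).symm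
      rw [hSeq]; exact hcard
  have hdisj : (↑(Finset.univ.filter (fun S : Finset (Fin n) => v ≤ S.card)) :
      Set (Finset (Fin n))).PairwiseDisjoint T := by
    intro S hS S' hS' hne
    simp only [Function.onFun]
    rw [Set.disjoint_left]
    intro ω hω hω'
    simp only [hTdef, Set.mem_setOf_eq] at hω hω'
    exact hne (by ext i; exact (hω i).trans (hω' i).symm)
  rw [hEvent, measure_biUnion_finset hdisj (fun S _ => hTmeas S)]
  calc ∑ S ∈ Finset.univ.filter (fun S : Finset (Fin n) => v ≤ S.card), μ (T S)
      = ∑ S ∈ Finset.univ.filter (fun S : Finset (Fin n) => v ≤ S.card),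
          q ^ S.card * (1 - q) ^ (n - S.card) := Finset.sum_congr rfl fun S _ => hTμ S
    _ = ∑ j ∈ Finset.Icc v n, ∑ S ∈ (Finset.univ.filter
          (fun S : Finset (Fin n) => v ≤ S.card)).filter (fun S => S.card = j),
          q ^ S.card * (1 - q) ^ (n - S.card) := by
        refine (Finset.sum_fiberwise_of_maps_to ?_ _).symm
        intro S hS
        simp only [Finset.mem_filter, Finset.mem_univ, true_and] at hS
        rw [Finset.mem_Icc]
        exact ⟨hS, by simpa using Finset.card_le_univ S⟩
    _ = ∑ j ∈ Finset.Icc v n, (n.choose j : ℝ≥0∞) * q ^ j * (1 - q) ^ (n - j) := by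
        refine Finset.sum_congr rfl fun j hj => ?_
        rw [Finset.mem_Icc] at hj
        have hfeq : (Finset.univ.filter (fun S : Finset (Fin n) => v ≤ S.card)).filter
            (fun S => S.card = j) = Finset.powersetCard j Finset.univ := by
          ext S
          simp only [Finset.mem_filter, Finset.mem_univ, true_and,
            Finset.mem_powersetCard_univ]
          constructor
          · exact fun h => h.2
          · intro h; exact ⟨h ▸ hj.1, h⟩
        rw [hfeq]
        rw [Finset.sum_congr rfl (fun S hS => by
          rw [Finset.mem_powersetCard_univ] at hS
          rw [hS] : ∀ S ∈ Finset.powersetCard j (Finset.univ : Finset (Fin n)),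
            q ^ S.card * (1-q) ^ (n - S.card) = q ^ j * (1-q)^(n-j))]
        rw [Finset.sum_const, Finset.card_powersetCard, Finset.card_univ, Fintype.card_fin,
          nsmul_eq_mul, mul_assoc]

end AuxLemmas

/-- Equation (5) of Proposition 4 of the paper (miscoverage rate control): if
`X₁, …, X_{n₁}` are i.i.d. with common law `ν` whose cumulative distribution function
`F` is continuous (equivalently `ν` is atomless), `α ∈ (0,1)`,
`v = ⌈(n₁ + 1)(1 - α)⌉ ≤ n₁`, and `X_(v)` is the `v`-th order statistic, then
`P(1 - F(X_(v)) > α) = ∑_{j=v}^{n₁} C(n₁,j) (1-α)^j α^(n₁-j)`. -/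
theorem miscoverage_rate_control
    {Ω : Type*} [MeasurableSpace Ω] (μ : Measure Ω) [IsProbabilityMeasure μ]
    (n₁ : ℕ) (X : Fin n₁ → Ω → ℝ) (hmeas : ∀ i, Measurable (X i))
    (hindep : iIndepFun X μ)
    (ν : Measure ℝ) [IsProbabilityMeasure ν]
    (hid : ∀ i, Measure.map (X i) μ = ν)
    (F : ℝ → ℝ) (hF : F = fun t => (ν (Set.Iic t)).toReal)
    (hFcont : Continuous F)
    (α : ℝ) (hα : α ∈ Set.Ioo (0 : ℝ) 1)
    (v : ℕ) (hv : v = ⌈((n₁ : ℝ) + 1) * (1 - α)⌉₊) (hvn : v ≤ n₁) :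
    μ {ω | α < 1 - F (orderStat (fun i => X i ω) v)} =
      ENNReal.ofReal
        (∑ j ∈ Finset.Icc v n₁, (n₁.choose j : ℝ) * (1 - α) ^ j * α ^ (n₁ - j)) := by
  classical
  obtain ⟨hα0, hα1⟩ := hα
  set t : ℝ := 1 - α with htdef
  have ht0 : 0 < t := by simp only [htdef]; linarith
  have ht1 : t < 1 := by simp only [htdef]; linarith
  have hmono : Monotone F := by
    have hFeq : F = (cdf ν : ℝ → ℝ) := by funext x; rw [hF, cdf_eq_real, measureReal_def]
    exact hFeq ▸ monotone_cdf ν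
  set s : Set ℝ := {y | F y < t} with hsdef
  have hs : MeasurableSet s := hFcont.measurable measurableSet_Iio
  have hv1 : 0 < v := by
    rw [hv]
    refine Nat.ceil_pos.mpr (mul_pos ?_ ht0)
    positivity
  -- event rewrite
  have hEv : {ω | α < 1 - F (orderStat (fun i => X i ω) v)}
      = {ω | v ≤ (Finset.univ.filter fun i => X i ω ∈ s).card} := by
    ext ω
    simp only [Set.mem_setOf_eq]
    set L := (List.ofFn (fun i => X i ω)).insertionSort (· ≤ ·) with hL
    have hsort : L.Pairwise (· ≤ ·) := List.pairwise_insertionSort _ _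
    have hlen : L.length = n₁ := by
      simp [hL, List.length_insertionSort]
    have hk : v - 1 < L.length := by omega
    have hcount := aux_sorted_countP hsort (fun y => decide (F y < t))
      (fun a b hab hb => by
        simp only [decide_eq_true_eq] at *
        exact lt_of_le_of_lt (hmono hab) hb) (v - 1) hk
    have hLcount : L.countP (fun y => decide (F y < t))
        = (Finset.univ.filter fun i => X i ω ∈ s).card := by
      rw [hL, (List.perm_insertionSort (· ≤ ·) _).countP_eq, aux_countP_ofFn]
      refine congrArg Finset.card (Finset.filter_congr fun i _ => ?_)
      simp [hsdef]
    have hord : orderStat (fun i => X i ω) v = L.getD (v - 1) 0 := rfl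
    constructor
    · intro h
      have hFo : F (orderStat (fun i => X i ω) v) < t := by
        simp only [htdef]; linarith
      have h2 := hcount.1 (by rw [← hord]; exact decide_eq_true hFo)
      rw [hLcount] at h2
      omega
    · intro h
      have h2 : v - 1 < L.countP (fun y => decide (F y < t)) := by
        rw [hLcount]; omega
      have h3 := hcount.2 h2
      rw [← hord, decide_eq_true_eq] at h3
      simp only [htdef] at h3
      linarith
  have hνs : ν s = ENNReal.ofReal t := aux_uniform ν F hF hFcont ht0 ht1
  have hqi : ∀ i, μ (X i ⁻¹' s) = ENNReal.ofReal t := by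
    intro i
    rw [← Measure.map_apply (hmeas i) hs, hid i, hνs]
  rw [hEv, aux_binomial_count μ n₁ X hmeas hindep s hs (ENNReal.ofReal t) hqi v]
  have h1q : (1 : ℝ≥0∞) - ENNReal.ofReal t = ENNReal.ofReal α := by
    have hα' : α = 1 - t := by simp [htdef]
    rw [hα', ENNReal.ofReal_sub 1 (le_of_lt ht0), ENNReal.ofReal_one]
  rw [h1q, ENNReal.ofReal_sum_of_nonneg (fun j _ => by positivity)]
  refine Finset.sum_congr rfl fun j _ => ?_
  rw [ENNReal.ofReal_mul (by positivity), ENNReal.ofReal_mul (by positivity),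
    ENNReal.ofReal_pow (by linarith), ENNReal.ofReal_pow (le_of_lt hα0),
    ENNReal.ofReal_natCast]
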